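/- Let Γ be a complete set of representatives of the isomorphism classes of finitely presented left R-modules, and let PI = ∏_{S∈Γ} S⁺ be the product of their character modules. Then PI is a pi-indigent right R-module: its subinjectivity domain consists exactly of the absolutely pure right R-modules. -/

import Mathlib

universe u

open LinearMap MulOpposite

/-! Character module -/

/-- The character group `M⁺ = Hom_ℤ(M, ℚ/ℤ)`. -/
abbrev CharMod (M : Type u) [AddCommGroup M] : Type u := M →+ AddCircle (1 : ℚ)

/-- If `M` is a left `S`-module, then `M⁺` is a right `S`-module via `(f • r) m = f (r • m)`. -/
instance CharMod.moduleRight (S : Type u) [Ring S] (M : Type u) [AddCommGroup M]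
    [Module S M] : Module Sᵐᵒᵖ (CharMod M) where
  smul r f := f.comp (DistribMulAction.toAddMonoidHom M (unop r))
  one_smul f := by
    apply AddMonoidHom.ext; intro m
    show f ((unop (1 : Sᵐᵒᵖ)) • m) = f m
    simp
  mul_smul r s f := by
    apply AddMonoidHom.ext; intro m
    show f ((unop (r * s)) • m) = f ((unop s) • ((unop r) • m))
    simp [mul_smul]
  smul_zero r := by apply AddMonoidHom.ext; intro m; rfl
  smul_add r f g := by apply AddMonoidHom.ext; intro m; rfl
  add_smul r s f := by
    apply AddMonoidHom.ext; intro m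
    show f ((unop (r + s)) • m) = f ((unop r) • m) + f ((unop s) • m)
    rw [unop_add, add_smul, map_add]
  zero_smul f := by
    apply AddMonoidHom.ext; intro m
    show f ((unop (0 : Sᵐᵒᵖ)) • m) = 0
    simp

/-- If `M` is a right `S`-module, then `M⁺` is a left `S`-module via `(r • f) m = f (m • r)`. -/
instance CharMod.moduleLeft (S : Type u) [Ring S] (M : Type u) [AddCommGroup M]
    [Module Sᵐᵒᵖ M] : Module S (CharMod M) where
  smul r f := f.comp (DistribMulAction.toAddMonoidHom M (op r))
  one_smul f := by
    apply AddMonoidHom.ext; intro m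
    show f ((op (1 : S)) • m) = f m
    simp
  mul_smul r s f := by
    apply AddMonoidHom.ext; intro m
    show f ((op (r * s)) • m) = f ((op s) • ((op r) • m))
    rw [← mul_smul, ← op_mul]
  smul_zero r := by apply AddMonoidHom.ext; intro m; rfl
  smul_add r f g := by apply AddMonoidHom.ext; intro m; rfl
  add_smul r s f := by
    apply AddMonoidHom.ext; intro m
    show f ((op (r + s)) • m) = f ((op r) • m) + f ((op s) • m)
    rw [op_add, add_smul, map_add]
  zero_smul f := by
    apply AddMonoidHom.ext; intro m
    show f ((op (0 : S)) • m) = 0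
    simp

/-! Tensor product of a right module and a left module over a (possibly noncommutative) ring -/

section Tensor

variable (S : Type u) [Ring S]

/-- The bilinearity relations defining `M ⊗_S N` as a quotient of `M ⊗_ℤ N`. -/
def tensorRel (M N : Type u) [AddCommGroup M] [Module Sᵐᵒᵖ M] [AddCommGroup N] [Module S N] :
    Submodule ℤ (TensorProduct ℤ M N) :=
  Submodule.span ℤ {x | ∃ (m : M) (r : S) (n : N),
    x = (op r • m) ⊗ₜ[ℤ] n - m ⊗ₜ[ℤ] (r • n)}

/-- `M ⊗_S N` for a right `S`-module `M` and a left `S`-module `N`. -/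
def RTensor (M N : Type u) [AddCommGroup M] [Module Sᵐᵒᵖ M] [AddCommGroup N] [Module S N] :
    Type u := TensorProduct ℤ M N ⧸ tensorRel S M N

noncomputable instance (M N : Type u) [AddCommGroup M] [Module Sᵐᵒᵖ M] [AddCommGroup N] [Module S N] :
    AddCommGroup (RTensor S M N) :=
  inferInstanceAs (AddCommGroup (TensorProduct ℤ M N ⧸ tensorRel S M N))

/-- Functoriality of `M ⊗_S -` in the left-module variable. -/
noncomputable def rTensorMap (M : Type u) [AddCommGroup M] [Module Sᵐᵒᵖ M] {N B : Type u}
    [AddCommGroup N] [Module S N] [AddCommGroup B] [Module S B] (g : N →ₗ[S] B) :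
    RTensor S M N →ₗ[ℤ] RTensor S M B :=
  Submodule.mapQ _ _ (TensorProduct.map LinearMap.id g.toAddMonoidHom.toIntLinearMap)
    (by
      rw [tensorRel, Submodule.span_le]
      rintro x ⟨m, r, n, rfl⟩
      change TensorProduct.map LinearMap.id g.toAddMonoidHom.toIntLinearMap _ ∈ tensorRel S M B
      rw [map_sub, TensorProduct.map_tmul, TensorProduct.map_tmul]
      simp only [LinearMap.id_apply, AddMonoidHom.coe_toIntLinearMap, LinearMap.toAddMonoidHom_coe]
      rw [map_smul]
      exact Submodule.subset_span ⟨m, r, g n, rfl⟩)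

/-- Functoriality of `- ⊗_S N` in the right-module variable. -/
noncomputable def lTensorMap {M B : Type u} [AddCommGroup M] [Module Sᵐᵒᵖ M] [AddCommGroup B]
    [Module Sᵐᵒᵖ B] (h : M →ₗ[Sᵐᵒᵖ] B) (N : Type u) [AddCommGroup N] [Module S N] :
    RTensor S M N →ₗ[ℤ] RTensor S B N :=
  Submodule.mapQ _ _ (TensorProduct.map h.toAddMonoidHom.toIntLinearMap LinearMap.id)
    (by
      rw [tensorRel, Submodule.span_le]
      rintro x ⟨m, r, n, rfl⟩
      change TensorProduct.map h.toAddMonoidHom.toIntLinearMap LinearMap.id _ ∈ tensorRel S B N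
      rw [map_sub, TensorProduct.map_tmul, TensorProduct.map_tmul]
      simp only [LinearMap.id_apply, AddMonoidHom.coe_toIntLinearMap, LinearMap.toAddMonoidHom_coe]
      rw [map_smul]
      exact Submodule.subset_span ⟨h m, r, n, rfl⟩)

end Tensor

/-! Basic relative homological notions -/

section Defs

variable (S : Type u) [Ring S]

/-- `M` is `N`-subinjective: every map `N → M` extends along every embedding of `N`. -/
def Subinjective (N M : Type u) [AddCommGroup N] [Module S N] [AddCommGroup M]
    [Module S M] : Prop :=
  ∀ (K : Type u) [AddCommGroup K] [Module S K] (i : N →ₗ[S] K), Function.Injective i →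
    ∀ f : N →ₗ[S] M, ∃ h : K →ₗ[S] M, h ∘ₗ i = f

/-- `M` is an injective module. -/
def InjMod (M : Type u) [AddCommGroup M] [Module S M] : Prop :=
  ∀ (N : Type u) [AddCommGroup N] [Module S N], Subinjective S N M

/-- `M` is `N`-subprojective. -/
def Subprojective (M N : Type u) [AddCommGroup M] [Module S M] [AddCommGroup N]
    [Module S N] : Prop :=
  ∀ (B : Type u) [AddCommGroup B] [Module S B] (g : B →ₗ[S] N), Function.Surjective g →
    ∀ f : M →ₗ[S] N, ∃ h : M →ₗ[S] B, g ∘ₗ h = f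

/-- A monomorphism of left `S`-modules is pure if it stays injective after
tensoring with any right `S`-module. -/
def IsPureMono {A B : Type u} [AddCommGroup A] [Module S A] [AddCommGroup B] [Module S B]
    (i : A →ₗ[S] B) : Prop :=
  Function.Injective i ∧
    ∀ (M : Type u) [AddCommGroup M] [Module Sᵐᵒᵖ M], Function.Injective (rTensorMap S M i)

/-- `N` is absolutely pure (fp-injective): every embedding of `N` is pure. -/
def AbsPure (N : Type u) [AddCommGroup N] [Module S N] : Prop :=
  ∀ (K : Type u) [AddCommGroup K] [Module S K] (i : N →ₗ[S] K), Function.Injective i →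
    IsPureMono S i

/-- `N` is absolutely `M`-pure, for a right module `M`. -/
def AbsMPure (M : Type u) [AddCommGroup M] [Module Sᵐᵒᵖ M] (N : Type u) [AddCommGroup N]
    [Module S N] : Prop :=
  ∀ (B : Type u) [AddCommGroup B] [Module S B] (i : N →ₗ[S] B), Function.Injective i →
    Function.Injective (rTensorMap S M i)

/-- `M` is pure-injective: maps into `M` extend along pure monomorphisms. -/
def PureInjective (M : Type u) [AddCommGroup M] [Module S M] : Prop :=
  ∀ (A B : Type u) [AddCommGroup A] [Module S A] [AddCommGroup B] [Module S B]
    (i : A →ₗ[S] B), IsPureMono S i → ∀ f : A →ₗ[S] M, ∃ h : B →ₗ[S] M, h ∘ₗ i = f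

/-- `M` is indigent: its subinjectivity domain is exactly the injective modules. -/
def Indigent (M : Type u) [AddCommGroup M] [Module S M] : Prop :=
  ∀ (N : Type u) [AddCommGroup N] [Module S N], Subinjective S N M ↔ InjMod S N

/-- `M` is pi-indigent: `M` is pure-injective and its subinjectivity domain is exactly
the absolutely pure modules. -/
def PiIndigent (M : Type u) [AddCommGroup M] [Module S M] : Prop :=
  PureInjective S M ∧
    ∀ (N : Type u) [AddCommGroup N] [Module S N], Subinjective S N M ↔ AbsPure S N

/-- Flatness via the equational criterion. -/
def FlatMod (M : Type u) [AddCommGroup M] [Module S M] : Prop :=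
  ∀ (n : ℕ) (r : Fin n → S) (x : Fin n → M), (∑ i, r i • x i) = 0 →
    ∃ (m : ℕ) (a : Fin n → Fin m → S) (y : Fin m → M),
      (∀ i, x i = ∑ j, a i j • y j) ∧ ∀ j, (∑ i, r i * a i j) = 0

/-- Finitely presented module. -/
def FPMod (M : Type u) [AddCommGroup M] [Module S M] : Prop :=
  ∃ (n : ℕ) (K : Submodule S (Fin n → S)), K.FG ∧
    Nonempty ((((Fin n → S)) ⧸ K) ≃ₗ[S] M)

/-- `Ext¹_S(M, N) = 0`, expressed by the splitting of every extension of `N` by `M`. -/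
def ExtVanish (M N : Type u) [AddCommGroup M] [Module S M] [AddCommGroup N] [Module S N] :
    Prop :=
  ∀ (B : Type u) [AddCommGroup B] [Module S B] (i : N →ₗ[S] B) (p : B →ₗ[S] M),
    Function.Injective i → Function.Surjective p → LinearMap.range i = LinearMap.ker p →
      ∃ s : M →ₗ[S] B, p ∘ₗ s = LinearMap.id

/-- `Tor₁^S(N, T) = 0` for a right module `N` and a left module `T`. -/
def TorVanish (N : Type u) [AddCommGroup N] [Module Sᵐᵒᵖ N] (T : Type u) [AddCommGroup T]
    [Module S T] : Prop :=
  ∀ (P K : Type u) [AddCommGroup P] [Module Sᵐᵒᵖ P] [AddCommGroup K] [Module Sᵐᵒᵖ K]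
    (i : K →ₗ[Sᵐᵒᵖ] P) (p : P →ₗ[Sᵐᵒᵖ] N), Module.Projective Sᵐᵒᵖ P →
      Function.Injective i → Function.Surjective p →
        LinearMap.range i = LinearMap.ker p → Function.Injective (lTensorMap S i T)

/-- `M` is a Whitehead test module for injectivity (i-test). -/
def ITest (M : Type u) [AddCommGroup M] [Module S M] : Prop :=
  ∀ (N : Type u) [AddCommGroup N] [Module S N], ExtVanish S M N → InjMod S N

/-- `S` is (left) n-saturated: `S` is not semisimple and every finitely generated
non-projective module is i-test. -/
def NSaturated : Prop :=
  ¬ IsSemisimpleRing S ∧ ∀ (M : Type u) [AddCommGroup M] [Module S M],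
    Module.Finite S M → ¬ Module.Projective S M → ITest S M

/-- A submodule is essential if it intersects every nonzero submodule nontrivially. -/
def EssentialIn {M : Type u} [AddCommGroup M] [Module S M] (A : Submodule S M) : Prop :=
  ∀ B : Submodule S M, B ≠ ⊥ → A ⊓ B ≠ ⊥

/-- `M` is a singular module: every element is annihilated by an essential left ideal. -/
def SingularMod (M : Type u) [AddCommGroup M] [Module S M] : Prop :=
  ∀ x : M, EssentialIn S (LinearMap.ker (LinearMap.toSpanSingleton S M x))

/-- `S` is (left) nonsingular: `Z(S) = 0`. -/
def NonsingularRing : Prop :=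
  ∀ r : S, EssentialIn S (LinearMap.ker (LinearMap.toSpanSingleton S S r)) → r = 0

/-- The socle of a module: the supremum of its simple submodules. -/
def socle (M : Type u) [AddCommGroup M] [Module S M] : Submodule S M :=
  sSup {N : Submodule S M | IsAtom N}

/-- von Neumann regular ring. -/
def IsVNR : Prop := ∀ a : S, ∃ r : S, a * r * a = a

/-- (left) V-ring: every simple module is injective. -/
def VRing : Prop :=
  ∀ (M : Type u) [AddCommGroup M] [Module S M], IsSimpleModule S M → InjMod S M

/-- (left) hereditary: every left ideal is projective. -/
def HereditaryRing : Prop := ∀ I : Submodule S S, Module.Projective S I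

/-- (left) semihereditary: every finitely generated left ideal is projective. -/
def SemihereditaryRing : Prop := ∀ I : Submodule S S, I.FG → Module.Projective S I

/-- (left) SI-ring: every singular module is injective. -/
def SIRing : Prop :=
  ∀ (M : Type u) [AddCommGroup M] [Module S M], SingularMod S M → InjMod S M

/-- quasi-Frobenius ring: two-sided Noetherian and self-injective. -/
def QFRing : Prop :=
  IsNoetherianRing S ∧ IsNoetherianRing Sᵐᵒᵖ ∧ InjMod S S ∧ InjMod Sᵐᵒᵖ S

/-- A module is uniserial if its submodules are totally ordered. -/
def Uniserial (M : Type u) [AddCommGroup M] [Module S M] : Prop :=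
  ∀ A B : Submodule S M, A ≤ B ∨ B ≤ A

/-- (left) serial ring: `S` is a finite direct sum of uniserial left ideals. -/
def SerialRing : Prop :=
  ∃ (n : ℕ) (f : Fin n → Submodule S S), (∀ i, Uniserial S (f i)) ∧
    iSupIndep f ∧ iSup f = ⊤

/-- (left) coherent: every finitely generated left ideal is finitely presented. -/
def CoherentRing : Prop := ∀ I : Submodule S S, I.FG → FPMod S I

/-- Indecomposable ring: no nontrivial central idempotents. -/
def IndecompRing : Prop :=
  Nontrivial S ∧ ∀ e : S, e * e = e → (∀ r : S, e * r = r * e) → e = 0 ∨ e = 1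

end Defs

/-! ### Auxiliary machinery -/

namespace RTensor

section basic
variable (S : Type u) [Ring S]
variable {M : Type u} [AddCommGroup M] [Module Sᵐᵒᵖ M]
variable {N : Type u} [AddCommGroup N] [Module S N]

noncomputable instance : Module ℤ (RTensor S M N) :=
  inferInstanceAs (Module ℤ (TensorProduct ℤ M N ⧸ tensorRel S M N))

/-- quotient map -/
noncomputable def mk : TensorProduct ℤ M N →ₗ[ℤ] RTensor S M N := (tensorRel S M N).mkQ

/-- pure tensors -/
noncomputable def tmul (m : M) (n : N) : RTensor S M N := mk S (m ⊗ₜ[ℤ] n)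

lemma mk_surjective : Function.Surjective (mk S (M := M) (N := N)) :=
  Submodule.mkQ_surjective _

lemma tmul_rel (r : S) (m : M) (n : N) :
    tmul S (op r • m) n = tmul S m (r • n) := by
  rw [tmul, tmul, ← sub_eq_zero, ← map_sub]
  show Submodule.Quotient.mk _ = (0 : TensorProduct ℤ M N ⧸ tensorRel S M N)
  rw [Submodule.Quotient.mk_eq_zero]
  exact Submodule.subset_span ⟨m, r, n, rfl⟩

lemma add_tmul (m m' : M) (n : N) : tmul S (m + m') n = tmul S m n + tmul S m' n := by
  rw [tmul, tmul, tmul, ← map_add, TensorProduct.add_tmul]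

lemma tmul_add (m : M) (n n' : N) : tmul S m (n + n') = tmul S m n + tmul S m n' := by
  rw [tmul, tmul, tmul, ← map_add, TensorProduct.tmul_add]

lemma zero_tmul (n : N) : tmul S (0 : M) n = 0 := by
  rw [tmul, TensorProduct.zero_tmul, map_zero]

lemma tmul_zero (m : M) : tmul S m (0 : N) = 0 := by
  rw [tmul, TensorProduct.tmul_zero, map_zero]

lemma zsmul_tmul (z : ℤ) (m : M) (n : N) : tmul S (z • m) n = z • tmul S m n := by
  rw [tmul, tmul, ← map_smul, TensorProduct.smul_tmul']

lemma rTensorMap_tmul {B : Type u} [AddCommGroup B] [Module S B] (g : N →ₗ[S] B)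
    (m : M) (n : N) : rTensorMap S M g (tmul S m n) = tmul S m (g n) := by
  show Submodule.mapQ _ _ _ _ (Submodule.Quotient.mk _) = _
  rfl

lemma lTensorMap_tmul {B : Type u} [AddCommGroup B] [Module Sᵐᵒᵖ B] (h : M →ₗ[Sᵐᵒᵖ] B)
    (m : M) (n : N) : lTensorMap S h N (tmul S m n) = tmul S (h m) n := by
  show Submodule.mapQ _ _ _ _ (Submodule.Quotient.mk _) = _
  rfl

lemma addHom_ext {A : Type*} [AddCommMonoid A] {f g : RTensor S M N →+ A}
    (h : ∀ m n, f (tmul S m n) = g (tmul S m n)) : f = g := by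
  ext x
  obtain ⟨w, rfl⟩ := mk_surjective S x
  induction w using TensorProduct.induction_on with
  | zero => rw [map_zero, map_zero, map_zero]
  | tmul m n => exact h m n
  | add a b ha hb => rw [map_add (mk S), map_add, map_add, ha, hb]

lemma map_comm {B K : Type u} [AddCommGroup B] [Module Sᵐᵒᵖ B] [AddCommGroup K] [Module S K]
    (h : M →ₗ[Sᵐᵒᵖ] B) (g : N →ₗ[S] K) (x : RTensor S M N) :
    lTensorMap S h K (rTensorMap S M g x) = rTensorMap S B g (lTensorMap S h N x) := by
  obtain ⟨w, rfl⟩ := mk_surjective S x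
  induction w using TensorProduct.induction_on with
  | zero => simp only [map_zero]
  | tmul m n =>
      rw [show (mk S (m ⊗ₜ[ℤ] n) : RTensor S M N) = tmul S m n from rfl,
        rTensorMap_tmul, lTensorMap_tmul, lTensorMap_tmul, rTensorMap_tmul]
  | add a b ha hb => rw [map_add (mk S), map_add, map_add, map_add, map_add, ha, hb]

end basic

end RTensor


section charbasics

lemma char_extend {X Y : Type u} [AddCommGroup X] [AddCommGroup Y] (j : X →+ Y)
    (hj : Function.Injective j) (φ : X →+ AddCircle (1 : ℚ)) :
    ∃ ψ : Y →+ AddCircle (1 : ℚ), ψ.comp j = φ := by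
  obtain ⟨ψ, hψ⟩ := CharacterModule.dual_surjective_of_injective (R := ℤ)
    j.toIntLinearMap hj (show CharacterModule X from φ)
  exact ⟨ψ, hψ⟩

lemma char_sep {X : Type u} [AddCommGroup X] {a : X} (ha : a ≠ 0) :
    ∃ χ : X →+ AddCircle (1 : ℚ), χ a ≠ 0 := by
  obtain ⟨c, hc⟩ := CharacterModule.exists_character_apply_ne_zero_of_ne_zero ha
  exact ⟨c, hc⟩

end charbasics

namespace RTensor

section char2

variable (S : Type u) [Ring S]
variable {M : Type u} [AddCommGroup M] [Module Sᵐᵒᵖ M]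
variable {N : Type u} [AddCommGroup N] [Module S N]

/-- The pairing `M ⊗ℤ N → ℚ/ℤ` induced by `f : N →ₗ[S] M⁺`. -/
noncomputable def pairing (f : N →ₗ[S] CharMod M) :
    TensorProduct ℤ M N →ₗ[ℤ] AddCircle (1 : ℚ) :=
  TensorProduct.lift
    { toFun := fun m =>
        { toFun := fun n => f n m
          map_add' := fun n n' => by
            show f (n + n') m = f n m + f n' m
            rw [map_add]; rfl
          map_smul' := fun z n => by
            show f (z • n) m = z • (f n m)
            rw [map_zsmul]; rfl }
      map_add' := fun m m' => LinearMap.ext fun n => (f n).map_add m m'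
      map_smul' := fun z m => LinearMap.ext fun n => by
        simp only [RingHom.id_apply, LinearMap.smul_apply, LinearMap.coe_mk, AddHom.coe_mk]
        exact (f n).map_zsmul z m }

lemma pairing_rel (f : N →ₗ[S] CharMod M) :
    tensorRel S M N ≤ LinearMap.ker (pairing S f) := by
  rw [tensorRel, Submodule.span_le]
  rintro x ⟨m, r, n, rfl⟩
  simp only [SetLike.mem_coe, LinearMap.mem_ker, map_sub]
  have e1 : pairing S f ((op r • m) ⊗ₜ[ℤ] n) = f n (op r • m) := rfl
  have e2 : pairing S f (m ⊗ₜ[ℤ] (r • n)) = f (r • n) m := rfl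
  rw [e1, e2, f.map_smul]
  exact sub_self _

/-- characters of `N → M⁺` to characters of `M ⊗ N` -/
noncomputable def toChar (f : N →ₗ[S] CharMod M) : RTensor S M N →+ AddCircle (1 : ℚ) :=
  (Submodule.liftQ _ (pairing S f) (pairing_rel S f)).toAddMonoidHom

lemma toChar_tmul (f : N →ₗ[S] CharMod M) (m : M) (n : N) :
    toChar S f (tmul S m n) = f n m := rfl

/-- characters of `M ⊗ N` to maps `N → M⁺` -/
noncomputable def ofChar (χ : RTensor S M N →+ AddCircle (1 : ℚ)) : N →ₗ[S] CharMod M where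
  toFun n :=
    { toFun := fun m => χ (tmul S m n)
      map_zero' := by
        show χ (tmul S (0 : M) n) = 0
        rw [zero_tmul, map_zero]
      map_add' := fun m m' => by
        show χ (tmul S (m + m') n) = χ (tmul S m n) + χ (tmul S m' n)
        rw [add_tmul, map_add] }
  map_add' n n' := AddMonoidHom.ext fun m => by
    show χ (tmul S m (n + n')) = χ (tmul S m n) + χ (tmul S m n')
    rw [tmul_add, map_add]
  map_smul' r n := AddMonoidHom.ext fun m => by
    show χ (tmul S m (r • n)) = χ (tmul S (op r • m) n)
    rw [tmul_rel]

lemma ofChar_apply (χ : RTensor S M N →+ AddCircle (1 : ℚ)) (n : N) (m : M) :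
    ofChar S χ n m = χ (tmul S m n) := rfl

lemma toChar_ofChar (χ : RTensor S M N →+ AddCircle (1 : ℚ)) :
    toChar S (ofChar S χ) = χ :=
  addHom_ext S fun m n => by rw [toChar_tmul]; rfl

/-- Character modules are pure-injective (single module version). -/
lemma charmod_extend {A B : Type u} [AddCommGroup A] [Module S A] [AddCommGroup B] [Module S B]
    (i : A →ₗ[S] B) (hi : IsPureMono S i) (f : A →ₗ[S] CharMod M) :
    ∃ h : B →ₗ[S] CharMod M, h ∘ₗ i = f := by
  obtain ⟨ψ, hψ⟩ := char_extend (rTensorMap S M i).toAddMonoidHom (hi.2 M) (toChar S f)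
  refine ⟨ofChar S ψ, LinearMap.ext fun a => AddMonoidHom.ext fun m => ?_⟩
  show ψ (tmul S m (i a)) = f a m
  have h2 : ψ (rTensorMap S M i (tmul S m a)) = toChar S f (tmul S m a) :=
    DFunLike.congr_fun hψ (tmul S m a)
  rw [rTensorMap_tmul] at h2
  rw [h2, toChar_tmul]

end char2

end RTensor

/-- transport of a left `R`-module structure to a left `Rᵐᵒᵖᵐᵒᵖ`-module structure -/
def modOpOp (R : Type u) [Ring R] (W : Type u) [AddCommGroup W] [Module R W] :
    Module Rᵐᵒᵖᵐᵒᵖ W :=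
  { smul := fun x w => x.unop.unop • w
    one_smul := fun w => one_smul R w
    mul_smul := fun x y w => by
      show (x * y).unop.unop • w = x.unop.unop • y.unop.unop • w
      rw [unop_mul, unop_mul, mul_smul]
    smul_zero := fun x => smul_zero _
    smul_add := fun x w w' => smul_add _ _ _
    add_smul := fun x y w => by
      show (x + y).unop.unop • w = x.unop.unop • w + y.unop.unop • w
      rw [unop_add, unop_add, add_smul]
    zero_smul := fun w => by
      show (0 : Rᵐᵒᵖᵐᵒᵖ).unop.unop • w = 0
      rw [unop_zero, unop_zero, zero_smul] }

example (R : Type u) [Ring R] (W : Type u) [AddCommGroup W] [Module R W] :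
    (letI := modOpOp R W; CharMod.moduleLeft Rᵐᵒᵖ W) = CharMod.moduleRight R W := rfl


namespace RTensor

section exact

variable (S : Type u) [Ring S]
variable {P M : Type u} [AddCommGroup P] [Module Sᵐᵒᵖ P] [AddCommGroup M] [Module Sᵐᵒᵖ M]
variable {N : Type u} [AddCommGroup N] [Module S N]

/-- right-exactness of the tensor product: kernel elements come from the kernel of the
presentation -/
lemma exact_ker (p : P →ₗ[Sᵐᵒᵖ] M) (hp : Function.Surjective p)
    (u : RTensor S P N) (hu : lTensorMap S p N u = 0) :
    u ∈ Submodule.span ℤ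
      {x : RTensor S P N | ∃ q ∈ LinearMap.ker p, ∃ n : N, x = tmul S q n} := by
  classical
  set Q := LinearMap.ker p with hQ
  set QN : Submodule ℤ (TensorProduct ℤ P N) :=
    Submodule.span ℤ {x | ∃ q ∈ Q, ∃ n : N, x = q ⊗ₜ[ℤ] n} with hQN
  set D := tensorRel S P N ⊔ QN with hD
  let σ : M → P := Function.surjInv hp
  have hσ : ∀ m, p (σ m) = m := fun m => Function.surjInv_eq hp m
  have hdiff : ∀ (a b : P) (n : N), p a = p b → D.mkQ (a ⊗ₜ[ℤ] n) = D.mkQ (b ⊗ₜ[ℤ] n) := by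
    intro a b n h
    rw [← sub_eq_zero, ← map_sub, ← TensorProduct.sub_tmul, Submodule.mkQ_apply,
      Submodule.Quotient.mk_eq_zero]
    refine Submodule.mem_sup_right (Submodule.subset_span ⟨a - b, ?_, n, rfl⟩)
    rw [hQ, LinearMap.mem_ker, map_sub, h, sub_self]
  let β : M →ₗ[ℤ] N →ₗ[ℤ] (TensorProduct ℤ P N ⧸ D) :=
    { toFun := fun m =>
        { toFun := fun n => D.mkQ (σ m ⊗ₜ[ℤ] n)
          map_add' := fun n n' => by
            show D.mkQ (σ m ⊗ₜ[ℤ] (n + n')) = _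
            rw [TensorProduct.tmul_add, map_add]
          map_smul' := fun z n => by
            show D.mkQ (σ m ⊗ₜ[ℤ] (z • n)) = z • D.mkQ (σ m ⊗ₜ[ℤ] n)
            rw [TensorProduct.tmul_smul, map_smul] }
      map_add' := fun m m' => LinearMap.ext fun n => by
        show D.mkQ (σ (m + m') ⊗ₜ[ℤ] n) = D.mkQ (σ m ⊗ₜ[ℤ] n) + D.mkQ (σ m' ⊗ₜ[ℤ] n)
        rw [← map_add, ← TensorProduct.add_tmul]
        exact hdiff _ _ n (by rw [map_add, hσ, hσ, hσ])
      map_smul' := fun z m => LinearMap.ext fun n => by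
        show D.mkQ (σ (z • m) ⊗ₜ[ℤ] n) = z • D.mkQ (σ m ⊗ₜ[ℤ] n)
        rw [← map_smul, TensorProduct.smul_tmul']
        exact hdiff _ _ n (by rw [hσ, map_zsmul, hσ]) }
  let L : TensorProduct ℤ M N →ₗ[ℤ] (TensorProduct ℤ P N ⧸ D) := TensorProduct.lift β
  have hrel : tensorRel S M N ≤ LinearMap.ker L := by
    rw [tensorRel, Submodule.span_le]
    rintro x ⟨m, r, n, rfl⟩
    simp only [SetLike.mem_coe, LinearMap.mem_ker, map_sub]
    have e1 : L ((op r • m) ⊗ₜ[ℤ] n) = D.mkQ (σ (op r • m) ⊗ₜ[ℤ] n) := rfl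
    have e2 : L (m ⊗ₜ[ℤ] (r • n)) = D.mkQ (σ m ⊗ₜ[ℤ] (r • n)) := rfl
    rw [e1, e2, hdiff (σ (op r • m)) (op r • σ m) n (by rw [hσ, map_smul, hσ]),
      ← map_sub, Submodule.mkQ_apply, Submodule.Quotient.mk_eq_zero]
    exact Submodule.mem_sup_left (Submodule.subset_span ⟨σ m, r, n, rfl⟩)
  let L' : RTensor S M N →ₗ[ℤ] (TensorProduct ℤ P N ⧸ D) := Submodule.liftQ _ L hrel
  have hcomp : ∀ w : TensorProduct ℤ P N, L' (lTensorMap S p N (mk S w)) = D.mkQ w := by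
    intro w
    induction w using TensorProduct.induction_on with
    | zero => simp only [map_zero]
    | tmul a n =>
        rw [show (mk S (a ⊗ₜ[ℤ] n) : RTensor S P N) = tmul S a n from rfl,
          lTensorMap_tmul]
        show D.mkQ (σ (p a) ⊗ₜ[ℤ] n) = D.mkQ (a ⊗ₜ[ℤ] n)
        exact hdiff _ _ n (by rw [hσ])
    | add a b ha hb => rw [map_add (mk S), map_add, map_add, map_add, ha, hb]
  obtain ⟨w, rfl⟩ := mk_surjective S u
  have hw : D.mkQ w = 0 := by rw [← hcomp w, hu, map_zero]
  rw [Submodule.mkQ_apply, Submodule.Quotient.mk_eq_zero] at hw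
  rw [hD] at hw
  obtain ⟨t, ht, v, hv, rfl⟩ := Submodule.mem_sup.1 hw
  have hmkt : (mk S t : RTensor S P N) = 0 := (Submodule.Quotient.mk_eq_zero _).2 ht
  rw [map_add, hmkt, zero_add]
  rw [hQN] at hv
  have hmap : (mk S v : RTensor S P N) ∈
      Submodule.map (mk S (M := P) (N := N))
        (Submodule.span ℤ {x | ∃ q ∈ Q, ∃ n : N, x = q ⊗ₜ[ℤ] n}) :=
    Submodule.mem_map_of_mem hv
  rw [Submodule.map_span] at hmap
  refine Submodule.span_mono ?_ hmap
  rintro _ ⟨y, ⟨q, hq, n, rfl⟩, rfl⟩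
  exact ⟨q, hq, n, rfl⟩

/-- converting span membership into a finite sum of pure tensors with entries in `Q` -/
lemma span_to_qsum (Q : Submodule Sᵐᵒᵖ P) (u : RTensor S P N)
    (hu : u ∈ Submodule.span ℤ {x : RTensor S P N | ∃ q ∈ Q, ∃ n : N, x = tmul S q n}) :
    ∃ (k : ℕ) (q : Fin k → P) (nn : Fin k → N),
      (∀ j, q j ∈ Q) ∧ u = ∑ j, tmul S (q j) (nn j) := by
  classical
  obtain ⟨k, f, g, hsum⟩ := Submodule.mem_span_set'.1 hu
  have hmem : ∀ j : Fin k, ∃ q, q ∈ Q ∧ ∃ n : N, (g j : RTensor S P N) = tmul S q n := by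
    intro j
    obtain ⟨q, hq, n, hn⟩ := (g j).2
    exact ⟨q, hq, n, hn⟩
  choose qf hqfQ nf hqfeq using hmem
  refine ⟨k, fun j => f j • qf j, nf, fun j => zsmul_mem (hqfQ j) _, ?_⟩
  rw [← hsum]
  refine Finset.sum_congr rfl fun j _ => ?_
  rw [hqfeq j]
  exact (zsmul_tmul S _ _ _).symm

end exact

end RTensor


section part1

variable {R : Type u} [Ring R]

/-- character modules of left `R`-modules are pure-injective right `R`-modules -/
lemma charW_extend (W : Type u) [AddCommGroup W] [Module R W]
    {A B : Type u} [AddCommGroup A] [Module Rᵐᵒᵖ A] [AddCommGroup B] [Module Rᵐᵒᵖ B]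
    (i : A →ₗ[Rᵐᵒᵖ] B) (hi : IsPureMono Rᵐᵒᵖ i) (f : A →ₗ[Rᵐᵒᵖ] CharMod W) :
    ∃ h : B →ₗ[Rᵐᵒᵖ] CharMod W, h ∘ₗ i = f := by
  letI := modOpOp R W
  exact RTensor.charmod_extend Rᵐᵒᵖ i hi f

/-- products of character modules of left modules are pure-injective -/
lemma pi_pureInjective (ι : Type u) (Γ : ι → Type u)
    [∀ i, AddCommGroup (Γ i)] [∀ i, Module R (Γ i)] :
    PureInjective Rᵐᵒᵖ (∀ i, CharMod (Γ i)) := by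
  classical
  intro A B _ _ _ _ i hi f
  have H : ∀ j, ∃ h : B →ₗ[Rᵐᵒᵖ] CharMod (Γ j),
      h ∘ₗ i = (LinearMap.proj j) ∘ₗ f := fun j =>
    charW_extend (Γ j) i hi ((LinearMap.proj j) ∘ₗ f)
  choose h hh using H
  refine ⟨LinearMap.pi h, ?_⟩
  refine LinearMap.ext fun a => funext fun j => ?_
  exact DFunLike.congr_fun (hh j) a

end part1


section hard

set_option maxHeartbeats 1000000
set_option synthInstance.maxHeartbeats 400000

variable {R : Type u} [Ring R]

/-- the canonical ring homomorphism `R →+* Rᵐᵒᵖᵐᵒᵖ` -/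
def opop : R →+* Rᵐᵒᵖᵐᵒᵖ where
  toFun r := op (op r)
  map_one' := rfl
  map_mul' a b := by simp [op_mul]
  map_zero' := rfl
  map_add' a b := by simp [op_add]

/-- finitely presented approximations to a module carrying finitely many prescribed
relations -/
lemma fp_approx {M : Type u} [AddCommGroup M] [Module Rᵐᵒᵖᵐᵒᵖ M]
    (E : Finset M) (k : ℕ) (q : Fin k → (M →₀ Rᵐᵒᵖᵐᵒᵖ))
    (hq : ∀ j, Finsupp.linearCombination Rᵐᵒᵖᵐᵒᵖ (_root_.id : M → M) (q j) = 0)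
    (hsupp : ∀ j m, m ∈ (q j).support → m ∈ E) :
    ∃ (F : Type u) (_ : AddCommGroup F) (_ : Module R F) (_ : Module Rᵐᵒᵖᵐᵒᵖ F)
      (π : (M →₀ Rᵐᵒᵖᵐᵒᵖ) →ₗ[Rᵐᵒᵖᵐᵒᵖ] F) (gS : F →ₗ[Rᵐᵒᵖᵐᵒᵖ] M),
      FPMod R F ∧
      (∀ (s : Rᵐᵒᵖᵐᵒᵖ) (x : F), s • x = s.unop.unop • x) ∧
      (∀ j, π (q j) = 0) ∧
      (∀ m ∈ E, gS (π (Finsupp.single m 1)) = m) := by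
  classical
  letI instRM : Module R M := Module.compHom M (opop (R := R))
  let n : ℕ := Fintype.card ↥E
  let ee : ↥E ≃ Fin n := Fintype.equivFin ↥E
  let g0 : Fin n → M := fun t => ((ee.symm t : ↥E) : M)
  have hg0 : ∀ (m : M) (h : m ∈ E), g0 (ee ⟨m, h⟩) = m := fun m h => by
    show ((ee.symm (ee ⟨m, h⟩) : ↥E) : M) = m
    rw [Equiv.symm_apply_apply]
  let γ₀ : (Fin n → R) →ₗ[R] M :=
    { toFun := fun v => ∑ t, v t • g0 t
      map_add' := fun v v' => by
        show (∑ t, (v t + v' t) • g0 t) = (∑ t, v t • g0 t) + ∑ t, v' t • g0 t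
        rw [← Finset.sum_add_distrib]
        exact Finset.sum_congr rfl fun t _ => add_smul _ _ _
      map_smul' := fun r v => by
        show (∑ t, (r * v t) • g0 t) = r • ∑ t, v t • g0 t
        rw [Finset.smul_sum]
        exact Finset.sum_congr rfl fun t _ => mul_smul _ _ _ }
  have hγsingle : ∀ a : Fin n, γ₀ (Pi.single a (1 : R)) = g0 a := by
    intro a
    show (∑ t, (Pi.single a (1 : R) : Fin n → R) t • g0 t) = g0 a
    rw [Finset.sum_eq_single a]
    · rw [Pi.single_eq_same, one_smul]
    · intro b _ hb
      rw [Pi.single_eq_of_ne hb, zero_smul]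
    · intro h
      exact absurd (Finset.mem_univ a) h
  let ρ : Fin k → (Fin n → R) := fun j =>
    ∑ m ∈ (q j).support.attach,
      ((q j) m.1).unop.unop • (Pi.single (ee ⟨m.1, hsupp j m.1 m.2⟩) (1 : R) : Fin n → R)
  let K₀ : Submodule R (Fin n → R) := Submodule.span R (Set.range ρ)
  have hsumq : ∀ j, (∑ m ∈ (q j).support.attach, ((q j) m.1) • (m.1 : M)) = 0 := by
    intro j
    have h1 := hq j
    rw [Finsupp.linearCombination_apply] at h1
    rw [Finset.sum_attach ((q j).support) (fun m => (q j) m • (m : M))]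
    exact h1
  have hK₀ : K₀ ≤ LinearMap.ker γ₀ := by
    refine Submodule.span_le.2 ?_
    rintro _ ⟨j, rfl⟩
    simp only [SetLike.mem_coe, LinearMap.mem_ker]
    show γ₀ (∑ m ∈ (q j).support.attach,
      ((q j) m.1).unop.unop • (Pi.single (ee ⟨m.1, hsupp j m.1 m.2⟩) (1 : R) : Fin n → R)) = 0
    rw [map_sum]
    have h3 : ∀ m ∈ (q j).support.attach,
        γ₀ (((q j) m.1).unop.unop •
          (Pi.single (ee ⟨m.1, hsupp j m.1 m.2⟩) (1 : R) : Fin n → R))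
        = ((q j) m.1) • (m.1 : M) := by
      intro m _
      rw [map_smul, hγsingle, hg0]
      rfl
    rw [Finset.sum_congr rfl h3]
    exact hsumq j
  let F : Type u := (Fin n → R) ⧸ K₀
  let g : F →ₗ[R] M := Submodule.liftQ K₀ γ₀ hK₀
  have hgmk : ∀ v : Fin n → R, g (Submodule.Quotient.mk v) = γ₀ v := fun v => rfl
  letI instF : Module Rᵐᵒᵖᵐᵒᵖ F := modOpOp R F
  let gS : F →ₗ[Rᵐᵒᵖᵐᵒᵖ] M :=
    { toFun := g
      map_add' := g.map_add
      map_smul' := fun s x => g.map_smul s.unop.unop x }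
  let val : M → F := fun m =>
    if h : m ∈ E then Submodule.Quotient.mk (Pi.single (ee ⟨m, h⟩) (1 : R) : Fin n → R) else 0
  let π : (M →₀ Rᵐᵒᵖᵐᵒᵖ) →ₗ[Rᵐᵒᵖᵐᵒᵖ] F := Finsupp.linearCombination Rᵐᵒᵖᵐᵒᵖ val
  refine ⟨F, inferInstance, inferInstance, instF, π, gS, ?_, fun s x => rfl, ?_, ?_⟩
  · exact ⟨n, K₀, Submodule.fg_span (Set.finite_range ρ), ⟨LinearEquiv.refl R F⟩⟩
  · intro j
    have e2 : π (q j) = Submodule.Quotient.mk (ρ j) := by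
      show Finsupp.linearCombination Rᵐᵒᵖᵐᵒᵖ val (q j) = Submodule.Quotient.mk (ρ j)
      rw [Finsupp.linearCombination_apply]
      rw [show ((q j).sum fun m s => s • val m)
          = ∑ m ∈ (q j).support.attach, ((q j) m.1) • val m.1 from
        (Finset.sum_attach ((q j).support) (fun m => (q j) m • val m)).symm]
      show _ = K₀.mkQ (∑ m ∈ (q j).support.attach,
        ((q j) m.1).unop.unop • (Pi.single (ee ⟨m.1, hsupp j m.1 m.2⟩) (1 : R) : Fin n → R))
      rw [map_sum]
      refine Finset.sum_congr rfl fun m _ => ?_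
      rw [show val m.1 = Submodule.Quotient.mk
          (Pi.single (ee ⟨m.1, hsupp j m.1 m.2⟩) (1 : R) : Fin n → R) from
        dif_pos (hsupp j m.1 m.2)]
      rw [map_smul]
      rfl
    rw [e2, Submodule.Quotient.mk_eq_zero]
    exact Submodule.subset_span ⟨j, rfl⟩
  · intro m hm
    have h4 : π (Finsupp.single m 1) = val m := by
      show Finsupp.linearCombination Rᵐᵒᵖᵐᵒᵖ val (Finsupp.single m (1 : Rᵐᵒᵖᵐᵒᵖ)) = val m
      rw [Finsupp.linearCombination_single, one_smul]
    rw [h4, show val m = Submodule.Quotient.mk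
        (Pi.single (ee ⟨m, hm⟩) (1 : R) : Fin n → R) from dif_pos hm]
    show g (Submodule.Quotient.mk (Pi.single (ee ⟨m, hm⟩) (1 : R) : Fin n → R)) = m
    rw [hgmk, hγsingle, hg0]

lemma subinj_absMpure (ι : Type u) (Γ : ι → Type u)
    [∀ i, AddCommGroup (Γ i)] [∀ i, Module R (Γ i)]
    (hcomplete : ∀ (F : Type u) [AddCommGroup F] [Module R F], FPMod R F →
      ∃ i, Nonempty (F ≃ₗ[R] Γ i))
    (N : Type u) [AddCommGroup N] [Module Rᵐᵒᵖ N]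
    (hN : Subinjective Rᵐᵒᵖ N (∀ i, CharMod (Γ i)))
    (K : Type u) [AddCommGroup K] [Module Rᵐᵒᵖ K] (i : N →ₗ[Rᵐᵒᵖ] K)
    (hi : Function.Injective i)
    (M : Type u) [AddCommGroup M] [Module Rᵐᵒᵖᵐᵒᵖ M] :
    Function.Injective (rTensorMap Rᵐᵒᵖ M i) := by
  classical
  have key : ∀ x : RTensor Rᵐᵒᵖ M N, rTensorMap Rᵐᵒᵖ M i x = 0 → x = 0 := by
    intro x hx
    obtain ⟨w, rfl⟩ := RTensor.mk_surjective Rᵐᵒᵖ x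
    obtain ⟨sfin, hw⟩ := TensorProduct.exists_finset w
    have hx' : (RTensor.mk Rᵐᵒᵖ w : RTensor Rᵐᵒᵖ M N)
        = ∑ a ∈ sfin, RTensor.tmul Rᵐᵒᵖ a.1 a.2 := by
      rw [hw, map_sum]
      rfl
    have hp : Function.Surjective (Finsupp.linearCombination Rᵐᵒᵖᵐᵒᵖ (_root_.id : M → M)) :=
      Finsupp.linearCombination_id_surjective _ _
    have hpsingle : ∀ m : M,
        Finsupp.linearCombination Rᵐᵒᵖᵐᵒᵖ (_root_.id : M → M) (Finsupp.single m 1) = m := by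
      intro m
      rw [Finsupp.linearCombination_single, one_smul]
      rfl
    set u : RTensor Rᵐᵒᵖ (M →₀ Rᵐᵒᵖᵐᵒᵖ) N :=
      ∑ a ∈ sfin, RTensor.tmul Rᵐᵒᵖ (Finsupp.single a.1 (1 : Rᵐᵒᵖᵐᵒᵖ)) a.2 with hu_def
    have hu1 : lTensorMap Rᵐᵒᵖ (Finsupp.linearCombination Rᵐᵒᵖᵐᵒᵖ (_root_.id : M → M)) N u
        = RTensor.mk Rᵐᵒᵖ w := by
      rw [hu_def, map_sum, hx']
      exact Finset.sum_congr rfl fun a _ => by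
        rw [RTensor.lTensorMap_tmul, hpsingle]
    have hu2 : lTensorMap Rᵐᵒᵖ (Finsupp.linearCombination Rᵐᵒᵖᵐᵒᵖ (_root_.id : M → M)) K
        (rTensorMap Rᵐᵒᵖ (M →₀ Rᵐᵒᵖᵐᵒᵖ) i u) = 0 := by
      rw [RTensor.map_comm, hu1]
      exact hx
    obtain ⟨k, q, kk, hq', hrep⟩ := RTensor.span_to_qsum Rᵐᵒᵖ
      (LinearMap.ker (Finsupp.linearCombination Rᵐᵒᵖᵐᵒᵖ (_root_.id : M → M))) _
      (RTensor.exact_ker Rᵐᵒᵖ _ hp _ hu2)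
    set E : Finset M :=
      (Finset.univ.biUnion fun j : Fin k => (q j).support) ∪ sfin.image Prod.fst with hE_def
    obtain ⟨F, instF1, instF2, instF3, π, gS, hFP, hsmulF, hπq, hgval⟩ :=
      fp_approx E k q (fun j => LinearMap.mem_ker.1 (hq' j))
        (fun j m hm => Finset.mem_union_left _
          (Finset.mem_biUnion.2 ⟨j, Finset.mem_univ j, hm⟩))
    obtain ⟨j₀, ⟨e⟩⟩ := hcomplete F hFP
    letI CL : Module Rᵐᵒᵖ (CharMod F) := CharMod.moduleLeft Rᵐᵒᵖ F
    set x' : RTensor Rᵐᵒᵖ F N := lTensorMap Rᵐᵒᵖ π N u with hx'_def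
    have hx'g : lTensorMap Rᵐᵒᵖ gS N x' = RTensor.mk Rᵐᵒᵖ w := by
      rw [hx'_def, hu_def, map_sum, map_sum, hx']
      refine Finset.sum_congr rfl fun a ha => ?_
      rw [RTensor.lTensorMap_tmul, RTensor.lTensorMap_tmul,
        hgval a.1 (Finset.mem_union_right _ (Finset.mem_image_of_mem Prod.fst ha))]
    have hA : rTensorMap Rᵐᵒᵖ F i x' = 0 := by
      rw [hx'_def, ← RTensor.map_comm, hrep, map_sum]
      refine Finset.sum_eq_zero fun j _ => ?_
      rw [RTensor.lTensorMap_tmul, hπq j, RTensor.zero_tmul]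
    have hB : x' = 0 := by
      by_contra hx0
      obtain ⟨χ, hχ⟩ := char_sep hx0
      set f : N →ₗ[Rᵐᵒᵖ] CharMod F := RTensor.ofChar Rᵐᵒᵖ χ with hf_def
      set fΓ : N →ₗ[Rᵐᵒᵖ] CharMod (Γ j₀) :=
        { toFun := fun nx => (f nx).comp e.symm.toLinearMap.toAddMonoidHom
          map_add' := fun n₁ n₂ => AddMonoidHom.ext fun y => by
            show f (n₁ + n₂) (e.symm y) = f n₁ (e.symm y) + f n₂ (e.symm y)
            rw [map_add]
            rfl
          map_smul' := fun r nx => AddMonoidHom.ext fun y => by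
            show f (r • nx) (e.symm y) = f nx (e.symm (r.unop • y))
            rw [f.map_smul]
            show f nx ((op r : Rᵐᵒᵖᵐᵒᵖ) • e.symm y) = f nx (e.symm (r.unop • y))
            rw [hsmulF, unop_op, map_smul e.symm] } with hfΓ_def
      set fP : N →ₗ[Rᵐᵒᵖ] (∀ i', CharMod (Γ i')) :=
        (LinearMap.single Rᵐᵒᵖ (fun i' => CharMod (Γ i')) j₀) ∘ₗ fΓ with hfP_def
      obtain ⟨H, hH⟩ := hN K i hi fP
      set hΓ : K →ₗ[Rᵐᵒᵖ] CharMod (Γ j₀) := (LinearMap.proj j₀) ∘ₗ H with hhΓ_def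
      set hF : K →ₗ[Rᵐᵒᵖ] CharMod F :=
        { toFun := fun kx => (hΓ kx).comp e.toLinearMap.toAddMonoidHom
          map_add' := fun k₁ k₂ => AddMonoidHom.ext fun z => by
            show hΓ (k₁ + k₂) (e z) = hΓ k₁ (e z) + hΓ k₂ (e z)
            rw [map_add]
            rfl
          map_smul' := fun r kx => AddMonoidHom.ext fun z => by
            show hΓ (r • kx) (e z) = hΓ kx (e ((op r : Rᵐᵒᵖᵐᵒᵖ) • z))
            rw [hΓ.map_smul, hsmulF, unop_op, map_smul e]
            rfl } with hhF_def
      have hHi : hF ∘ₗ i = f := by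
        refine LinearMap.ext fun nx => AddMonoidHom.ext fun z => ?_
        show hΓ (i nx) (e z) = f nx z
        have h5 : H (i nx) = fP nx := DFunLike.congr_fun hH nx
        have h6 : hΓ (i nx) = fΓ nx := by
          show (H (i nx)) j₀ = fΓ nx
          rw [h5]
          show (Pi.single j₀ (fΓ nx) : ∀ i', CharMod (Γ i')) j₀ = fΓ nx
          exact Pi.single_eq_same _ _
        rw [h6]
        show f nx (e.symm (e z)) = f nx z
        rw [e.symm_apply_apply]
      have h7 : (RTensor.toChar Rᵐᵒᵖ hF).comp (rTensorMap Rᵐᵒᵖ F i).toAddMonoidHom = χ := by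
        rw [← RTensor.toChar_ofChar Rᵐᵒᵖ χ, ← hf_def]
        refine RTensor.addHom_ext Rᵐᵒᵖ fun m nx => ?_
        show RTensor.toChar Rᵐᵒᵖ hF (rTensorMap Rᵐᵒᵖ F i (RTensor.tmul Rᵐᵒᵖ m nx))
          = RTensor.toChar Rᵐᵒᵖ f (RTensor.tmul Rᵐᵒᵖ m nx)
        rw [RTensor.rTensorMap_tmul, RTensor.toChar_tmul, RTensor.toChar_tmul]
        have h8 := DFunLike.congr_fun hHi nx
        exact DFunLike.congr_fun h8 m
      have h9 : χ x' = 0 := by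
        have h10 := DFunLike.congr_fun h7 x'
        rw [← h10]
        show RTensor.toChar Rᵐᵒᵖ hF (rTensorMap Rᵐᵒᵖ F i x') = 0
        rw [hA, map_zero]
      exact hχ h9
    rw [← hx'g, hB, map_zero]
  intro a b hab
  have h1 : rTensorMap Rᵐᵒᵖ M i (a - b) = 0 := by rw [map_sub, hab, sub_self]
  exact sub_eq_zero.1 (key _ h1)

end hard

theorem stmt_3 {R : Type u} [Ring R] (ι : Type u) (Γ : ι → Type u)
    [∀ i, AddCommGroup (Γ i)] [∀ i, Module R (Γ i)]
    (hfp : ∀ i, FPMod R (Γ i))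
    (hirr : ∀ i j, i ≠ j → IsEmpty (Γ i ≃ₗ[R] Γ j))
    (hcomplete : ∀ (F : Type u) [AddCommGroup F] [Module R F], FPMod R F →
      ∃ i, Nonempty (F ≃ₗ[R] Γ i)) :
    PiIndigent Rᵐᵒᵖ (∀ i, CharMod (Γ i)) := by
  constructor
  · exact pi_pureInjective ι Γ
  · intro N _ _
    constructor
    · intro hsub K _ _ i hi
      exact ⟨hi, fun M _ _ => subinj_absMpure ι Γ hcomplete N hsub K i hi M⟩
    · intro habs K _ _ i hi f
      exact pi_pureInjective ι Γ N K i (habs K i hi) f
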